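/- Let G = (U, V, E) be a bipartite graph with a perfect matching M. Direct every edge of M from U to V and every other edge from V to U. Consider the subgraph H induced by the 'relevant' edges, i.e., edges that belong to some perfect matching of G. Then every connected component of H that is not a single edge is strongly connected as a directed graph. -/

import Mathlib

/-- A perfect matching of the bipartite graph with edge set `E ⊆ Fin n × Fin n`. -/
def IsPM {n : ℕ} (E M : Finset (Fin n × Fin n)) : Prop :=
  M ⊆ E ∧
  (∀ u : Fin n, (M.filter (fun e => e.1 = u)).card = 1) ∧
  (∀ v : Fin n, (M.filter (fun e => e.2 = v)).card = 1)

/-- An edge is relevant if it lies in some perfect matching. -/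
def Relevant {n : ℕ} (E : Finset (Fin n × Fin n)) (e : Fin n × Fin n) : Prop :=
  ∃ M', IsPM E M' ∧ e ∈ M'

/-- One step of the orientation induced by the perfect matching `M` on the
subgraph of relevant edges: matching edges are directed `U → V` and the other
relevant edges `V → U`. -/
def Step {n : ℕ} (E M : Finset (Fin n × Fin n)) :
    (Fin n ⊕ Fin n) → (Fin n ⊕ Fin n) → Prop := fun x y =>
  ∃ u v : Fin n, Relevant E (u, v) ∧
    (((u, v) ∈ M ∧ x = Sum.inl u ∧ y = Sum.inr v) ∨
     ((u, v) ∈ E ∧ (u, v) ∉ M ∧ x = Sum.inr v ∧ y = Sum.inl u))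

namespace PMaux
variable {n : ℕ} {E M : Finset (Fin n × Fin n)}

lemma ex1 (hM : IsPM E M) (u : Fin n) : ∃ v, (u, v) ∈ M := by
  obtain ⟨e, he⟩ := Finset.card_eq_one.mp (hM.2.1 u)
  have h : e ∈ M.filter (fun e => e.1 = u) := he ▸ Finset.mem_singleton_self e
  rw [Finset.mem_filter] at h
  exact ⟨e.2, by rw [← h.2]; exact h.1⟩

lemma uniq1 (hM : IsPM E M) {u v v' : Fin n} (h : (u, v) ∈ M) (h' : (u, v') ∈ M) :
    v = v' := by
  obtain ⟨e, he⟩ := Finset.card_eq_one.mp (hM.2.1 u)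
  have h1 : (u,v) ∈ M.filter (fun e => e.1 = u) := Finset.mem_filter.mpr ⟨h, rfl⟩
  have h2 : (u,v') ∈ M.filter (fun e => e.1 = u) := Finset.mem_filter.mpr ⟨h', rfl⟩
  rw [he, Finset.mem_singleton] at h1 h2
  have := h1.trans h2.symm
  exact (Prod.mk.injEq _ _ _ _ ▸ this).2

lemma ex2 (hM : IsPM E M) (v : Fin n) : ∃ u, (u, v) ∈ M := by
  obtain ⟨e, he⟩ := Finset.card_eq_one.mp (hM.2.2 v)
  have h : e ∈ M.filter (fun e => e.2 = v) := he ▸ Finset.mem_singleton_self e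
  rw [Finset.mem_filter] at h
  exact ⟨e.1, by rw [← h.2]; exact h.1⟩

lemma uniq2 (hM : IsPM E M) {u u' v : Fin n} (h : (u, v) ∈ M) (h' : (u', v) ∈ M) :
    u = u' := by
  obtain ⟨e, he⟩ := Finset.card_eq_one.mp (hM.2.2 v)
  have h1 : (u,v) ∈ M.filter (fun e => e.2 = v) := Finset.mem_filter.mpr ⟨h, rfl⟩
  have h2 : (u',v) ∈ M.filter (fun e => e.2 = v) := Finset.mem_filter.mpr ⟨h', rfl⟩
  rw [he, Finset.mem_singleton] at h1 h2
  have := h1.trans h2.symm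
  exact (Prod.mk.injEq _ _ _ _ ▸ this).1

noncomputable def sig (hM : IsPM E M) : Fin n → Fin n := fun u => (ex1 hM u).choose

lemma sig_mem (hM : IsPM E M) (u : Fin n) : (u, sig hM u) ∈ M := (ex1 hM u).choose_spec

lemma sig_eq (hM : IsPM E M) {u v : Fin n} (h : (u, v) ∈ M) : sig hM u = v :=
  uniq1 hM (sig_mem hM u) h

noncomputable def tau (hM : IsPM E M) : Fin n → Fin n := fun v => (ex2 hM v).choose

lemma tau_mem (hM : IsPM E M) (v : Fin n) : (tau hM v, v) ∈ M := (ex2 hM v).choose_spec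

lemma tau_eq (hM : IsPM E M) {u v : Fin n} (h : (u, v) ∈ M) : tau hM v = u :=
  uniq2 hM (tau_mem hM v) h

lemma sig_inj (hM : IsPM E M) : Function.Injective (sig hM) := by
  intro a b h
  exact uniq2 hM (sig_mem hM a) (h ▸ sig_mem hM b)

lemma tau_inj (hM : IsPM E M) : Function.Injective (tau hM) := by
  intro a b h
  exact uniq1 hM (tau_mem hM a) (h ▸ tau_mem hM b)

variable {M' : Finset (Fin n × Fin n)}

/-- The composed map of alternating: M-partner on the right, then M'-partner back. -/
noncomputable def pim (hM : IsPM E M) (hM' : IsPM E M') : Fin n → Fin n :=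
  fun w => tau hM' (sig hM w)

lemma pim_inj (hM : IsPM E M) (hM' : IsPM E M') : Function.Injective (pim hM hM') :=
  (tau_inj hM').comp (sig_inj hM)

/-- One step of matching edge. -/
lemma step_match (hM : IsPM E M) {u v : Fin n} (h : (u, v) ∈ M) :
    Step E M (Sum.inl u) (Sum.inr v) :=
  ⟨u, v, ⟨M, hM, h⟩, Or.inl ⟨h, rfl, rfl⟩⟩

lemma step_nonmatch (hM' : IsPM E M') {u v : Fin n} (h : (u, v) ∈ M')
    (h2 : (u, v) ∉ M) : Step E M (Sum.inr v) (Sum.inl u) :=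
  ⟨u, v, ⟨M', hM', h⟩, Or.inr ⟨hM'.1 h, h2, rfl, rfl⟩⟩

/-- The alternating walk. -/
lemma walk (hM : IsPM E M) (hM' : IsPM E M') {u : Fin n}
    (hne : pim hM hM' u ≠ u) (i : ℕ) :
    Relation.ReflTransGen (Step E M) (Sum.inr (sig hM u))
      (Sum.inr (sig hM ((pim hM hM')^[i] u))) := by
  induction i with
  | zero => simp only [Function.iterate_zero, id_eq]; exact Relation.ReflTransGen.refl
  | succ i ih =>
    set π := pim hM hM' with hπ
    have hmem' : (π (π^[i] u), sig hM (π^[i] u)) ∈ M' := tau_mem hM' _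
    have hnotM : (π (π^[i] u), sig hM (π^[i] u)) ∉ M := by
      intro hmem
      have h0 : π (π^[i] u) = π^[i] u := uniq2 hM hmem (sig_mem hM _)
      have h2 : π^[i+1] u = π^[i] u := by
        rw [Function.iterate_succ_apply']; exact h0
      rw [Function.iterate_succ_apply] at h2
      exact hne ((pim_inj hM hM').iterate i h2)
    have s1 : Step E M (Sum.inr (sig hM (π^[i] u))) (Sum.inl (π (π^[i] u))) :=
      step_nonmatch hM' hmem' hnotM
    have s2 : Step E M (Sum.inl (π (π^[i] u))) (Sum.inr (sig hM (π (π^[i] u)))) :=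
      step_match hM (sig_mem hM _)
    rw [Function.iterate_succ_apply']
    exact ((ih.tail s1).tail s2)

/-- there is k ≥ 1 with π^[k] u = u -/
lemma ret (hM : IsPM E M) (hM' : IsPM E M') (u : Fin n) :
    ∃ k, 0 < k ∧ (pim hM hM')^[k] u = u := by
  set π := pim hM hM'
  have : ¬ Function.Injective (fun i : Fin (n+1) => π^[(i : ℕ)] u) := by
    intro hinj
    have := Fintype.card_le_of_injective _ hinj
    simp at this
  rw [Function.not_injective_iff] at this
  obtain ⟨i, j, hij, hne⟩ := this
  rcases lt_or_gt_of_ne hne with h | h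
  · refine ⟨(j : ℕ) - i, by omega, ?_⟩
    have : π^[(i:ℕ)] (π^[(j:ℕ)-i] u) = π^[(i:ℕ)] u := by
      rw [← Function.iterate_add_apply]
      have : (i:ℕ) + ((j:ℕ) - i) = j := by omega
      rw [this, hij]
    exact (pim_inj hM hM').iterate (i:ℕ) this
  · refine ⟨(i : ℕ) - j, by omega, ?_⟩
    have : π^[(j:ℕ)] (π^[(i:ℕ)-j] u) = π^[(j:ℕ)] u := by
      rw [← Function.iterate_add_apply]
      have : (j:ℕ) + ((i:ℕ) - j) = i := by omega
      rw [this, ← hij]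
    exact (pim_inj hM hM').iterate (j:ℕ) this

lemma pim_ne (hM : IsPM E M) (hM' : IsPM E M') {u v : Fin n}
    (hmem : (u, v) ∈ M') (hnot : (u, v) ∉ M) : pim hM hM' u ≠ u := by
  intro h
  have h1 : (pim hM hM' u, sig hM u) ∈ M' := tau_mem hM' _
  rw [h] at h1
  have : sig hM u = v := uniq1 hM' h1 hmem
  exact hnot (this ▸ sig_mem hM u)

lemma sig_last (hM : IsPM E M) (hM' : IsPM E M') {u v : Fin n}
    (hmem : (u, v) ∈ M') {k : ℕ} (hk : 0 < k) (hku : (pim hM hM')^[k] u = u) :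
    sig hM ((pim hM hM')^[k-1] u) = v := by
  have h1 : ((pim hM hM')^[k-1+1] u, sig hM ((pim hM hM')^[k-1] u)) ∈ M' := by
    rw [Function.iterate_succ_apply']; exact tau_mem hM' _
  have hk1 : k - 1 + 1 = k := by omega
  rw [hk1, hku] at h1
  exact uniq1 hM' h1 hmem

/-- Forward: a nonmatching relevant edge (u,v) admits a directed path inl u → inr v. -/
lemma fwd (hM : IsPM E M) (hM' : IsPM E M') {u v : Fin n}
    (hmem : (u, v) ∈ M') (hnot : (u, v) ∉ M) :
    Relation.ReflTransGen (Step E M) (Sum.inl u) (Sum.inr v) := by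
  obtain ⟨k, hk, hku⟩ := ret hM hM' u
  have h1 := walk hM hM' (pim_ne hM hM' hmem hnot) (k-1)
  rw [sig_last hM hM' hmem hk hku] at h1
  exact Relation.ReflTransGen.head (step_match hM (sig_mem hM u)) h1

/-- Backward: if u has a nonmatching M'-edge, the M-partner of u reaches inl u. -/
lemma back (hM : IsPM E M) (hM' : IsPM E M') {u v c : Fin n}
    (hmem : (u, v) ∈ M') (hnot : (u, v) ∉ M) (hc : (u, c) ∈ M) :
    Relation.ReflTransGen (Step E M) (Sum.inr c) (Sum.inl u) := by
  obtain ⟨k, hk, hku⟩ := ret hM hM' u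
  have h1 := walk hM hM' (pim_ne hM hM' hmem hnot) (k-1)
  rw [sig_last hM hM' hmem hk hku, sig_eq hM hc] at h1
  exact h1.tail (step_nonmatch hM' hmem hnot)

lemma backB (hM : IsPM E M) (hM' : IsPM E M') {u v : Fin n}
    (huv : (u, v) ∈ M) (hnot : (u, v) ∉ M') :
    Relation.ReflTransGen (Step E M) (Sum.inr v) (Sum.inl u) := by
  obtain ⟨b, hb⟩ := ex1 hM' u
  have hbM : (u, b) ∉ M := fun h => hnot ((uniq1 hM h huv) ▸ hb)
  exact back hM hM' hb hbM huv

end PMaux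

/-- Every connected component of the directed subgraph of relevant edges that is
not a single edge (i.e. is not contained in two vertices) is strongly
connected: weak connectivity implies directed reachability. -/
theorem stmt11 {n : ℕ} (E M : Finset (Fin n × Fin n)) (hM : IsPM E M)
    (x y : Fin n ⊕ Fin n)
    (hconn : Relation.ReflTransGen (fun a b => Step E M a b ∨ Step E M b a) x y)
    (hbig : ¬ ∃ a b : Fin n ⊕ Fin n,
      ∀ z, Relation.ReflTransGen (fun a b => Step E M a b ∨ Step E M b a) x z →
        z = a ∨ z = b) :
    Relation.ReflTransGen (Step E M) x y := by
  set W : (Fin n ⊕ Fin n) → (Fin n ⊕ Fin n) → Prop :=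
    fun a b => Step E M a b ∨ Step E M b a with hW
  have hWsymm : Symmetric W := fun a b h => h.symm
  induction hconn with
  | refl => exact Relation.ReflTransGen.refl
  | @tail b c hxb hbc ih =>
    refine ih.trans ?_
    rcases hbc with hs | hs
    · exact Relation.ReflTransGen.single hs
    · -- Step c b : need directed path from b back to c
      obtain ⟨u, v, hrel, hcase⟩ := hs
      rcases hcase with ⟨huvM, hc, hb⟩ | ⟨huvE, huvM, hc, hb⟩
      · -- matching edge : c = inl u, b = inr v, need Step* (inr v) (inl u)
        subst hc hb
        by_cases hex : ∃ M', IsPM E M' ∧ (u, v) ∉ M'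
        · obtain ⟨M', hM', hnot⟩ := hex
          exact PMaux.backB hM hM' huvM hnot
        · -- every perfect matching contains (u,v): component is {inl u, inr v}
          push_neg at hex
          exfalso
          apply hbig
          refine ⟨Sum.inl u, Sum.inr v, fun z hz => ?_⟩
          -- z is weakly reachable from x, hence from inr v
          have hvx : Relation.ReflTransGen W (Sum.inr v) x :=
            by haveI : Std.Symm W := ⟨fun a b h => hWsymm h⟩; exact Std.Symm.symm _ _ hxb
          have hvz : Relation.ReflTransGen W (Sum.inr v) z := hvx.trans hz
          -- show everything weakly reachable from inr v is in {inl u, inr v}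
          clear hvx hz hxb ih hrel
          induction hvz with
          | refl => exact Or.inr rfl
          | @tail p q hvp hpq ihp =>
            have hin : p = Sum.inl u ∨ p = Sum.inr v := ihp
            -- analyze the weak edge between p and q
            have key : ∀ w, (Step E M p w ∨ Step E M w p) →
                (w = Sum.inl u ∨ w = Sum.inr v) := by
              intro w hw
              rcases hw with ⟨u', v', hrel', ⟨hm, h1, h2⟩ | ⟨he, hm, h1, h2⟩⟩ |
                ⟨u', v', hrel', ⟨hm, h1, h2⟩ | ⟨he, hm, h1, h2⟩⟩
              · -- Step p w, matching: p = inl u', w = inr v'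
                rcases hin with hp | hp <;> rw [hp] at h1
                · have hu : u = u' := by injection h1
                  subst hu
                  have hv : v' = v := PMaux.uniq1 hM hm huvM
                  exact Or.inr (hv ▸ h2)
                · exact absurd h1 Sum.inr_ne_inl
              · -- Step p w, nonmatching: p = inr v', w = inl u'
                rcases hin with hp | hp <;> rw [hp] at h1
                · exact absurd h1 Sum.inl_ne_inr
                · have hv : v = v' := by injection h1
                  subst hv
                  obtain ⟨M'', hM'', hmem''⟩ := hrel'
                  have hu : u' = u := PMaux.uniq2 hM'' hmem'' (hex M'' hM'')
                  exact absurd (hu ▸ huvM) hm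
              · -- Step w p, matching: w = inl u', p = inr v'
                rcases hin with hp | hp <;> rw [hp] at h2
                · exact absurd h2 Sum.inl_ne_inr
                · have hv : v = v' := by injection h2
                  subst hv
                  have hu : u' = u := PMaux.uniq2 hM hm huvM
                  exact Or.inl (hu ▸ h1)
              · -- Step w p, nonmatching: w = inr v', p = inl u'
                rcases hin with hp | hp <;> rw [hp] at h2
                · have hu : u = u' := by injection h2
                  subst hu
                  obtain ⟨M'', hM'', hmem''⟩ := hrel'
                  have hv : v' = v := PMaux.uniq1 hM'' hmem'' (hex M'' hM'')
                  exact absurd (hv ▸ huvM) hm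
                · exact absurd h2 Sum.inr_ne_inl
            exact key q hpq
      · -- nonmatching edge : c = inr v, b = inl u, need Step* (inl u) (inr v)
        subst hc hb
        obtain ⟨M', hM', hmem'⟩ := hrel
        exact PMaux.fwd hM hM' hmem' huvM
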